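/- Let A, B, C, M be points of a real inner product space, let t₁, t₂, t₃ be nonzero real numbers with t := t₁+t₂+t₃ ≠ 0, and let P be the barycenter of {A,B,C} with weights (t₁,t₂,t₃). Then Lagrange's relation holds: MP² = (t₁·MA² + t₂·MB² + t₃·MC²)/t − (t₁t₂t₃/t²)·(a²/t₁ + b²/t₂ + c²/t₃), where a = BC, b = CA, c = AB. -/

import Mathlib

open RealInnerProductSpace


/-- Lagrange's relation: if `P` is the barycenter of `{A, B, C}` with nonzero
weights `(t₁, t₂, t₃)` and `t = t₁ + t₂ + t₃ ≠ 0`, then for any point `M`,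
`MP² = (t₁·MA² + t₂·MB² + t₃·MC²)/t − (t₁t₂t₃/t²)·(a²/t₁ + b²/t₂ + c²/t₃)`. -/
theorem stmt_1 {E : Type*} [NormedAddCommGroup E] [InnerProductSpace ℝ E]
    (A B C M P : E) (t₁ t₂ t₃ : ℝ)
    (ht₁ : t₁ ≠ 0) (ht₂ : t₂ ≠ 0) (ht₃ : t₃ ≠ 0)
    (ht : t₁ + t₂ + t₃ ≠ 0)
    (hP : ∀ N : E, (t₁ + t₂ + t₃) • (P - N) = t₁ • (A - N) + t₂ • (B - N) + t₃ • (C - N)) :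
    dist M P ^ 2 =
      (t₁ * dist M A ^ 2 + t₂ * dist M B ^ 2 + t₃ * dist M C ^ 2) / (t₁ + t₂ + t₃) -
        (t₁ * t₂ * t₃ / (t₁ + t₂ + t₃) ^ 2) *
          (dist B C ^ 2 / t₁ + dist C A ^ 2 / t₂ + dist A B ^ 2 / t₃) := by
  have h := hP M
  have hpp : (t₁ + t₂ + t₃) ^ 2 * ⟪P - M, P - M⟫ = ⟪t₁ • (A - M) + t₂ • (B - M) + t₃ • (C - M), t₁ • (A - M) + t₂ • (B - M) + t₃ • (C - M)⟫ := by
    rw [← h, real_inner_smul_left, real_inner_smul_right]; ring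
  simp only [inner_add_left, inner_add_right, real_inner_smul_left,
    real_inner_smul_right] at hpp
  have dist_sq : ∀ X Y : E, dist X Y ^ 2 = ⟪Y - X, Y - X⟫ := by
    intro X Y
    rw [dist_comm, dist_eq_norm, ← real_inner_self_eq_norm_sq]
  rw [dist_sq M P, dist_sq M A, dist_sq M B, dist_sq M C]
  have e1 : C - B = (C - M) - (B - M) := by abel
  have e2 : A - C = (A - M) - (C - M) := by abel
  have e3 : B - A = (B - M) - (A - M) := by abel
  rw [dist_sq B C, dist_sq C A, dist_sq A B, e1, e2, e3]
  simp only [inner_sub_left, inner_sub_right] at hpp ⊢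
  simp only [real_inner_comm A B, real_inner_comm A C, real_inner_comm A M,
    real_inner_comm A P, real_inner_comm B C, real_inner_comm B M, real_inner_comm B P,
    real_inner_comm C M, real_inner_comm C P, real_inner_comm M P] at hpp ⊢
  field_simp
  linear_combination hpp
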